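/- Let f : ℝ^d → ℝ be convex differentiable attaining its minimum f* with ‖x^0 − x*‖ ≤ R for some minimizer x*. Run the A-HPE framework with σ ∈ [0,1), η_k = η(1+k)^{(3p−1)/2}, β_k = Σ_{l=0}^k η_l, λ_k = η_k²/β_k. Then for all K ≥ 1, f(x_f^K) − f* ≤ ((3p+1)R²/(4η)) · K^{−(3p+1)/2}. -/

import Mathlib

open Finset

lemma grad_convex_ineq {d : ℕ} {f : EuclideanSpace ℝ (Fin d) → ℝ}
    (hconv : ConvexOn ℝ Set.univ f) (hdiff : Differentiable ℝ f)
    (a b : EuclideanSpace ℝ (Fin d)) :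
    f a + inner ℝ (gradient f a) (b - a) ≤ f b := by
  have hline : HasDerivAt (fun t : ℝ => a + t • (b - a)) (b - a) 0 := by
    simpa using ((hasDerivAt_id (0:ℝ)).smul_const (b - a)).const_add a
  have hcomp : HasDerivAt (fun t : ℝ => f (a + t • (b - a)))
      (fderiv ℝ f a (b - a)) 0 := by
    have h := (hdiff (a + (0:ℝ) • (b - a))).hasFDerivAt.comp_hasDerivAt 0 hline
    rw [zero_smul, add_zero] at h
    exact h
  have hg : ConvexOn ℝ Set.univ (fun t : ℝ => f (a + t • (b - a))) := by
    have h := hconv.comp_affineMap (AffineMap.lineMap a b)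
    have heq : (f ∘ (AffineMap.lineMap a b : ℝ →ᵃ[ℝ] _))
        = fun t : ℝ => f (a + t • (b - a)) := by
      funext t
      simp [AffineMap.lineMap_apply, add_comm]
    rw [heq] at h
    simpa using h
  have hslope := hg.le_slope_of_hasDerivAt (Set.mem_univ (0:ℝ)) (Set.mem_univ (1:ℝ))
    one_pos hcomp
  have hsl : slope (fun t : ℝ => f (a + t • (b - a))) 0 1 = f b - f a := by
    simp [slope_def_field]
  rw [hsl] at hslope
  have hfd : fderiv ℝ f a = InnerProductSpace.toDual ℝ _ (gradient f a) :=
    ((hdiff a).hasGradientAt.hasFDerivAt).fderiv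
  rw [hfd, InnerProductSpace.toDual_apply_apply] at hslope
  linarith

lemma sum_rpow_lower (q : ℝ) (hq : 0 ≤ q) (K : ℕ) :
    (K:ℝ) ^ (q+1) / (q+1) ≤ ∑ l ∈ Finset.range K, ((1:ℝ) + (l:ℝ)) ^ q := by
  have hmono : MonotoneOn (fun x : ℝ => x ^ q) (Set.Icc (0:ℝ) (0 + (K:ℕ))) := by
    intro u hu v hv huv
    exact Real.rpow_le_rpow hu.1 huv hq
  have hint := hmono.integral_le_sum
  rw [integral_rpow (Or.inl (by linarith : (-1:ℝ) < q))] at hint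
  have h0 : (0:ℝ) ^ (q+1) = 0 := Real.zero_rpow (by linarith)
  simp only [zero_add, h0, sub_zero] at hint
  refine hint.trans (le_of_eq ?_)
  refine Finset.sum_congr rfl fun i _ => ?_
  push_cast
  ring_nf

theorem optimal_tensor_rate {d : ℕ}
    (f : EuclideanSpace ℝ (Fin d) → ℝ)
    (hconv : ConvexOn ℝ Set.univ f) (hdiff : Differentiable ℝ f)
    (xstar : EuclideanSpace ℝ (Fin d)) (hmin : IsMinOn f Set.univ xstar)
    (R : ℝ) (p : ℕ) (hp : 1 ≤ p) (ηc : ℝ) (hηc : 0 < ηc)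
    (K : ℕ) (hK : 1 ≤ K) (σ : ℝ) (hσ : σ ∈ Set.Ico (0 : ℝ) 1)
    (η β lam α : ℕ → ℝ)
    (hη : ∀ k, η k = ηc * ((1 : ℝ) + (k : ℝ)) ^ ((3 * (p : ℝ) - 1) / 2))
    (hβ : ∀ k, β k = ∑ l ∈ Finset.range (k + 1), η l)
    (hlam : ∀ k, lam k = (η k) ^ 2 / β k)
    (hα : ∀ k, α k = η k / β k)
    (x xf xg : ℕ → EuclideanSpace ℝ (Fin d))
    (hx0 : x 0 = xf 0)
    (hR : ‖x 0 - xstar‖ ≤ R)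
    (hxg : ∀ k < K, xg k = α k • x k + (1 - α k) • xf k)
    (hinexact : ∀ k < K,
      ‖gradient f (xf (k + 1)) + (lam k)⁻¹ • (xf (k + 1) - xg k)‖ ≤
        σ * (lam k)⁻¹ * ‖xf (k + 1) - xg k‖)
    (hstep : ∀ k < K, x (k + 1) = x k - η k • gradient f (xf (k + 1))) :
    f (xf K) - f xstar ≤
      ((3 * (p : ℝ) + 1) * R ^ 2 / (4 * ηc)) * (K : ℝ) ^ (-(3 * (p : ℝ) + 1) / 2) := by
  obtain ⟨hσ0, hσ1⟩ := hσ
  have hp' : (1:ℝ) ≤ (p:ℝ) := by exact_mod_cast hp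
  have hq : (0:ℝ) ≤ (3 * (p:ℝ) - 1) / 2 := by linarith
  have hηpos : ∀ k, 0 < η k := fun k => by
    rw [hη k]
    exact mul_pos hηc (Real.rpow_pos_of_pos (by positivity) _)
  set B : ℕ → ℝ := fun k => ∑ l ∈ Finset.range k, η l with hB'
  have hBnonneg : ∀ k, 0 ≤ B k := fun k => Finset.sum_nonneg fun l _ => (hηpos l).le
  have hβB : ∀ k, β k = B k + η k := fun k => by
    rw [hβ k]; exact Finset.sum_range_succ _ _
  have hβpos : ∀ k, 0 < β k := fun k => by
    rw [hβB k]; have := hBnonneg k; have := hηpos k; linarith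
  have hlampos : ∀ k, 0 < lam k := fun k => by
    rw [hlam k]; exact div_pos (pow_pos (hηpos k) 2) (hβpos k)
  have hRnn : 0 ≤ R := le_trans (norm_nonneg _) hR
  have hgrad : ∀ a b, f a + (inner ℝ (gradient f a) (b - a) : ℝ) ≤ f b :=
    grad_convex_ineq hconv hdiff
  -- potential decrease
  have hpot : ∀ n, n ≤ K →
      2 * B n * (f (xf n) - f xstar) + ‖x n - xstar‖ ^ 2 ≤ R ^ 2 := by
    intro n
    induction n with
    | zero =>
      intro _
      have hB0 : B 0 = 0 := by simp [hB']
      have hx : ‖x 0 - xstar‖ ^ 2 ≤ R ^ 2 :=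
        pow_le_pow_left₀ (norm_nonneg _) hR 2
      rw [hB0]
      simpa using hx
    | succ k ih =>
      intro hk1
      have hkK : k < K := hk1
      have ihk := ih hkK.le
      set G := gradient f (xf (k+1)) with hG
      have hβk := hβB k
      have hBk := hBnonneg k
      have hηk := hηpos k
      -- F1 : convexity at xstar
      have F1 : f (xf (k+1)) - f xstar ≤
          (inner ℝ G (xf (k+1)) : ℝ) - (inner ℝ G xstar : ℝ) := by
        have h := hgrad (xf (k+1)) xstar
        rw [inner_sub_right] at h
        linarith
      -- F2 : convexity at xf k
      have F2 : f (xf (k+1)) - f (xf k) ≤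
          (inner ℝ G (xf (k+1)) : ℝ) - (inner ℝ G (xf k) : ℝ) := by
        have h := hgrad (xf (k+1)) (xf k)
        rw [inner_sub_right] at h
        linarith
      -- F3 : norm expansion of the step
      have F3 : ‖x (k+1) - xstar‖ ^ 2 = ‖x k - xstar‖ ^ 2
          - 2 * η k * ((inner ℝ G (x k) : ℝ) - (inner ℝ G xstar : ℝ))
          + η k ^ 2 * ‖G‖ ^ 2 := by
        have hd : x (k+1) - xstar = (x k - xstar) - η k • G := by
          rw [hstep k hkK]; abel
        rw [hd, norm_sub_sq_real, real_inner_smul_right, norm_smul,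
          Real.norm_eq_abs, abs_of_pos hηk, mul_pow,
          real_inner_comm, inner_sub_right]
        ring
      -- F4 : inner with xg identity
      have F4 : β k * (inner ℝ G (xg k) : ℝ) =
          η k * (inner ℝ G (x k) : ℝ) + B k * (inner ℝ G (xf k) : ℝ) := by
        have ha5 : (inner ℝ G (xg k) : ℝ) =
            α k * (inner ℝ G (x k) : ℝ) + (1 - α k) * (inner ℝ G (xf k) : ℝ) := by
          rw [hxg k hkK, inner_add_right, real_inner_smul_right, real_inner_smul_right]
        have hba : β k * α k = η k := by
          rw [hα k]; field_simp [(hβpos k).ne']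
        rw [ha5]
        linear_combination ((inner ℝ G (x k) : ℝ) - (inner ℝ G (xf k) : ℝ)) * hba
          + (inner ℝ G (xf k) : ℝ) * hβk
      -- F5 : from the inexactness condition
      have F5 : 2 * β k * ((inner ℝ G (xf (k+1)) : ℝ) - (inner ℝ G (xg k) : ℝ))
          + η k ^ 2 * ‖G‖ ^ 2 ≤ 0 := by
        set v := xf (k+1) - xg k with hvdef
        have hlamk := hlampos k
        have hinex := hinexact k hkK
        have hv : lam k • (G + (lam k)⁻¹ • v) = lam k • G + v := by
          rw [smul_add, smul_inv_smul₀ hlamk.ne']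
        have hn1 : ‖lam k • G + v‖ = lam k * ‖G + (lam k)⁻¹ • v‖ := by
          rw [← hv, norm_smul, Real.norm_eq_abs, abs_of_pos hlamk]
        have hle : ‖lam k • G + v‖ ≤ ‖v‖ := by
          rw [hn1]
          calc lam k * ‖G + (lam k)⁻¹ • v‖ ≤ lam k * (σ * (lam k)⁻¹ * ‖v‖) :=
                mul_le_mul_of_nonneg_left hinex hlamk.le
            _ = σ * ‖v‖ := by field_simp
            _ ≤ 1 * ‖v‖ := by
                have := norm_nonneg v
                nlinarith
            _ = ‖v‖ := one_mul _
        have hsq : ‖lam k • G + v‖ ^ 2 ≤ ‖v‖ ^ 2 :=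
          pow_le_pow_left₀ (norm_nonneg _) hle 2
        rw [norm_add_sq_real, norm_smul, Real.norm_eq_abs, abs_of_pos hlamk,
          real_inner_smul_left, mul_pow] at hsq
        have hsq' : 2 * lam k * (inner ℝ G v : ℝ) + lam k ^ 2 * ‖G‖ ^ 2 ≤ 0 := by
          linarith
        have hβlam : β k * lam k = η k ^ 2 := by
          rw [hlam k]; field_simp [(hβpos k).ne']
        have hkey := mul_le_mul_of_nonneg_left hsq'
          (div_nonneg (hβpos k).le hlamk.le)
        have hexpand : β k / lam k *
            (2 * lam k * (inner ℝ G v : ℝ) + lam k ^ 2 * ‖G‖ ^ 2)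
            = 2 * β k * (inner ℝ G v : ℝ) + β k * lam k * ‖G‖ ^ 2 := by
          field_simp
        rw [hexpand, hβlam, mul_zero] at hkey
        have hiv : (inner ℝ G v : ℝ) =
            (inner ℝ G (xf (k+1)) : ℝ) - (inner ℝ G (xg k) : ℝ) := by
          rw [hvdef, inner_sub_right]
        rw [hiv] at hkey
        linarith
      -- combine
      have hBsucc : B (k+1) = β k := by simp only [hB', hβ k]
      have P1 : B k * (f (xf (k+1)) - f (xf k)) ≤
          B k * ((inner ℝ G (xf (k+1)) : ℝ) - (inner ℝ G (xf k) : ℝ)) :=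
        mul_le_mul_of_nonneg_left F2 hBk
      have P2 : η k * (f (xf (k+1)) - f xstar) ≤
          η k * ((inner ℝ G (xf (k+1)) : ℝ) - (inner ℝ G xstar : ℝ)) :=
        mul_le_mul_of_nonneg_left F1 hηk.le
      rw [hBsucc, hβk]
      rw [hβk] at F4 F5
      linarith [P1, P2, F3, F4, F5, ihk]
  -- conclusion
  have hfin := hpot K le_rfl
  have hfpos : 0 ≤ f (xf K) - f xstar := by
    have h := hmin (Set.mem_univ (xf K))
    simp only [Set.mem_setOf_eq] at h
    linarith
  set s : ℝ := (3 * (p:ℝ) + 1) / 2 with hs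
  have hKpos : (0:ℝ) < (K:ℝ) := by exact_mod_cast Nat.lt_of_lt_of_le Nat.zero_lt_one hK
  have hT : (0:ℝ) < (K:ℝ) ^ s := Real.rpow_pos_of_pos hKpos s
  have hBK : 2 * ηc / (3 * (p:ℝ) + 1) * (K:ℝ) ^ s ≤ B K := by
    have hBsum : B K = ηc * ∑ l ∈ Finset.range K, ((1:ℝ) + (l:ℝ)) ^ ((3 * (p:ℝ) - 1) / 2) := by
      rw [hB', Finset.mul_sum]
      exact Finset.sum_congr rfl fun l _ => hη l
    have hl := sum_rpow_lower ((3 * (p:ℝ) - 1) / 2) hq K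
    have hqs : (3 * (p:ℝ) - 1) / 2 + 1 = s := by rw [hs]; ring
    rw [hqs] at hl
    have := mul_le_mul_of_nonneg_left hl hηc.le
    rw [← hBsum] at this
    calc 2 * ηc / (3 * (p:ℝ) + 1) * (K:ℝ) ^ s
        = ηc * ((K:ℝ) ^ s / s) := by rw [hs]; field_simp
      _ ≤ B K := this
  have hBKpos : 0 < B K := lt_of_lt_of_le (by positivity) hBK
  have h2 : f (xf K) - f xstar ≤ R ^ 2 / (2 * B K) := by
    rw [le_div_iff₀ (by positivity)]
    linarith [sq_nonneg ‖x K - xstar‖, hfin]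
  have h3 : R ^ 2 / (2 * B K) ≤
      (3 * (p:ℝ) + 1) * R ^ 2 / (4 * ηc) * ((K:ℝ) ^ s)⁻¹ := by
    have hden : 4 * ηc / (3 * (p:ℝ) + 1) * (K:ℝ) ^ s ≤ 2 * B K := by
      have : 2 * (2 * ηc / (3 * (p:ℝ) + 1) * (K:ℝ) ^ s) ≤ 2 * B K := by linarith [hBK]
      calc 4 * ηc / (3 * (p:ℝ) + 1) * (K:ℝ) ^ s
          = 2 * (2 * ηc / (3 * (p:ℝ) + 1) * (K:ℝ) ^ s) := by ring
        _ ≤ 2 * B K := this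
    calc R ^ 2 / (2 * B K) ≤ R ^ 2 / (4 * ηc / (3 * (p:ℝ) + 1) * (K:ℝ) ^ s) := by
          gcongr <;> first
            | positivity
            | exact sq_nonneg R
            | exact hden
      _ = (3 * (p:ℝ) + 1) * R ^ 2 / (4 * ηc) * ((K:ℝ) ^ s)⁻¹ := by
          rw [hs]
          field_simp
  have hexp : (-(3 * (p:ℝ) + 1) / 2) = -s := by rw [hs]; ring
  rw [hexp, Real.rpow_neg hKpos.le]
  exact h2.trans h3
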